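/- arXiv:2005.04036 — 4 statements merged into one kernel-verified Lean document; each statement's English description precedes it below -/
import Mathlib

section
/- Let w > 0, 0 < p ≤ 1, c ∈ ℝ, and x ∈ ℕ. Define C(X,c) = wX/2 + c(2−p)/(X+1) for X ∈ ℕ. Then C(x+1,c) ≤ C(x,c) if and only if c ≥ w(x+1)(x+2)/(2(2−p)). Consequently, the set of states for which idling (a smaller threshold) is preferable grows monotonically as c increases, i.e., the problem is indexable with Whittle index W(x,p) = w(x+1)(x+2)/(2(2−p)). -/
/-- Indexability without CSI: with `C(X,c) = wX/2 + c(2-p)/(X+1)`, threshold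
`x+1` is (weakly) preferable to threshold `x` iff the playing charge satisfies
`c ≥ w(x+1)(x+2)/(2(2-p))`, the Whittle index of state `x`. -/
theorem stmt_4 (w p c : ℝ) (hw : 0 < w) (hp0 : 0 < p) (hp1 : p ≤ 1) (x : ℕ) :
    (w * ((x : ℝ) + 1) / 2 + c * (2 - p) / ((x : ℝ) + 1 + 1)
      ≤ w * (x : ℝ) / 2 + c * (2 - p) / ((x : ℝ) + 1))
    ↔ c ≥ w * ((x : ℝ) + 1) * ((x : ℝ) + 2) / (2 * (2 - p)) := by
  have hX : (0:ℝ) < (x : ℝ) + 1 := by positivity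
  have hX2 : (0:ℝ) < (x : ℝ) + 1 + 1 := by positivity
  have h2p : (0:ℝ) < 2 - p := by linarith
  rw [ge_iff_le, div_le_iff₀ (by positivity), div_add_div _ _ (by norm_num : (2:ℝ) ≠ 0) hX2.ne', div_add_div _ _ (by norm_num : (2:ℝ) ≠ 0) hX.ne', div_le_div_iff₀ (by positivity) (by positivity)]
  constructor <;> intro h <;> nlinarith [sq_nonneg ((x:ℝ)+1), mul_pos hX hX2]
end

section
/- Let w ≥ 0, 0 ≤ p ≤ 1, γ ≥ 0, c ∈ ℝ. Define a sequence of functions Vₙ : ℕ → ℝ by V₀(x) = 0 for all x, and V_{n+1}(x) = min( wp + wx + γ(p Vₙ(x+1) + (1−p) Vₙ(x)), c + (1−p)wx + γ(p Vₙ(0) + (1−p) Vₙ(x)) ). Then for every n ∈ ℕ, Vₙ is nondecreasing in x. -/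
/-- Value iteration for the subproblem without CSI: with `V 0 ≡ 0` and
`V (n+1) x = min (wp + wx + γ(p V n (x+1) + (1-p) V n x))
             (c + (1-p)wx + γ(p V n 0 + (1-p) V n x))`,
every iterate `V n` is nondecreasing in the age `x`. -/
theorem stmt_8 (w p γ c : ℝ) (hw : 0 ≤ w) (hp0 : 0 ≤ p) (hp1 : p ≤ 1) (hγ : 0 ≤ γ)
    (V : ℕ → ℕ → ℝ)
    (hV0 : ∀ x : ℕ, V 0 x = 0)
    (hVrec : ∀ n x : ℕ, V (n + 1) x =
      min (w * p + w * (x : ℝ) + γ * (p * V n (x + 1) + (1 - p) * V n x))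
          (c + (1 - p) * w * (x : ℝ) + γ * (p * V n 0 + (1 - p) * V n x))) :
    ∀ n : ℕ, Monotone (V n) := by
  intro n
  induction n with
  | zero => intro a b _; simp [hV0]
  | succ n ih =>
    apply monotone_nat_of_le_succ
    intro x
    rw [hVrec n x, hVrec n (x + 1)]
    have h1 : V n x ≤ V n (x + 1) := ih (Nat.le_succ x)
    have h2 : V n (x + 1) ≤ V n (x + 2) := ih (Nat.le_succ _)
    have hx : (x : ℝ) ≤ (x : ℝ) + 1 := by linarith
    have hp' : 0 ≤ 1 - p := by linarith
    apply min_le_min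
    · push_cast
      nlinarith [mul_le_mul_of_nonneg_left h2 (mul_nonneg hγ hp0),
        mul_le_mul_of_nonneg_left h1 (mul_nonneg hγ hp')]
    · push_cast
      nlinarith [mul_le_mul_of_nonneg_left h1 (mul_nonneg hγ hp')]
end

section
/- Let w ≥ 0, 0 < p ≤ 1, 0 < γ ≤ 1, c ∈ ℝ, and let V : ℕ → ℝ be nonnegative and satisfy, for all x ∈ ℕ, the optimality equation V(x) = min( wp + wx + γ(p V(x+1) + (1−p) V(x)), c + (1−p)wx + γ(p V(0) + (1−p) V(x)) ). Then for all x ∈ ℕ, p(V(x) − V(0)) ≤ c + (1−p)wx. -/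
/-- Bound on the relative cost function (no CSI): if `V ≥ 0` satisfies the
discounted optimality equation, then `p(V(x) - V(0)) ≤ c + (1-p)wx`. -/
theorem stmt_9 (w p γ c : ℝ) (hw : 0 ≤ w) (hp0 : 0 < p) (hp1 : p ≤ 1)
    (hγ0 : 0 < γ) (hγ1 : γ ≤ 1)
    (V : ℕ → ℝ) (hVnn : ∀ x : ℕ, 0 ≤ V x)
    (hV : ∀ x : ℕ, V x =
      min (w * p + w * (x : ℝ) + γ * (p * V (x + 1) + (1 - p) * V x))
          (c + (1 - p) * w * (x : ℝ) + γ * (p * V 0 + (1 - p) * V x))) :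
    ∀ x : ℕ, p * (V x - V 0) ≤ c + (1 - p) * w * (x : ℝ) := by
  intro x
  have h2 : V x ≤ c + (1 - p) * w * (x : ℝ) + γ * (p * V 0 + (1 - p) * V x) :=
    (hV x).le.trans (min_le_right _ _)
  have hVx := hVnn x
  have hV0 := hVnn 0
  nlinarith [mul_nonneg (sub_nonneg.2 hγ1) hVx, mul_nonneg (mul_nonneg hγ0.le (sub_nonneg.2 hp1)) hVx, mul_nonneg (mul_nonneg (sub_nonneg.2 hγ1) hp0.le) hV0, mul_nonneg (mul_nonneg (sub_nonneg.2 hp1) (sub_nonneg.2 hγ1)) hVx]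
end

section
/- Let w ≥ 0, 0 ≤ p ≤ 1, γ ≥ 0, c ∈ ℝ, and let V : ℕ → ℝ be nondecreasing. If, for some x ∈ ℕ, c + (1−p)wx + γ(p V(0) + (1−p) V(x)) < wp + wx + γ(p V(x+1) + (1−p) V(x)), then also c + (1−p)w(x+1) + γ(p V(0) + (1−p) V(x+1)) < wp + w(x+1) + γ(p V(x+2) + (1−p) V(x+1)). -/
/-- Threshold structure of the γ-optimal policy (no CSI): for a nondecreasing
value function `V`, if scheduling is strictly better than idling in state `x`,
then it is strictly better in state `x+1` as well. -/
theorem stmt_10 (w p γ c : ℝ) (hw : 0 ≤ w) (hp0 : 0 ≤ p) (hp1 : p ≤ 1) (hγ : 0 ≤ γ)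
    (V : ℕ → ℝ) (hV : Monotone V) (x : ℕ)
    (hx : c + (1 - p) * w * (x : ℝ) + γ * (p * V 0 + (1 - p) * V x)
        < w * p + w * (x : ℝ) + γ * (p * V (x + 1) + (1 - p) * V x)) :
    c + (1 - p) * w * ((x : ℝ) + 1) + γ * (p * V 0 + (1 - p) * V (x + 1))
        < w * p + w * ((x : ℝ) + 1) + γ * (p * V (x + 2) + (1 - p) * V (x + 1)) := by
  have h1 : V (x + 1) ≤ V (x + 2) := hV (by omega)
  nlinarith [mul_nonneg (mul_nonneg hγ hp0) (sub_nonneg.2 h1), mul_nonneg hp0 hw]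
end
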